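/- Let Y be a second countable topological space and Z a nonempty Baire space. Then a subset A of Y is residual in Y if and only if A × Z is residual in the product space Y × Z. -/
import Mathlib

open Set TopologicalSpace

/-- Let `Y` be a second countable topological space and `Z` a nonempty
Baire space. Then a subset `A` of `Y` is residual in `Y` if and only if `A × Z` is residual
in the product space `Y × Z`. -/
theorem stmt_1 (Y Z : Type*) [TopologicalSpace Y] [TopologicalSpace Z]
    [SecondCountableTopology Y] [Nonempty Z] [BaireSpace Z] (A : Set Y) :
    A ∈ residual Y ↔ (A ×ˢ (Set.univ : Set Z)) ∈ residual (Y × Z) := by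
  constructor
  · intro hA
    have : A ×ˢ (Set.univ : Set Z) = Prod.fst ⁻¹' A := by
      ext ⟨y, z⟩; simp
    rw [this]
    exact tendsto_residual_of_isOpenMap continuous_fst isOpenMap_fst hA
  · intro hA
    rw [mem_residual_iff] at hA
    obtain ⟨S, hSo, hSd, hSc, hSsub⟩ := hA
    -- the countable family of dense open subsets of Z
    set B : Set (Set Y) := {b ∈ countableBasis Y | b.Nonempty} with hB
    set E : Set (Y × Z) × Set Y → Set Z :=
      fun p => Prod.snd '' (p.1 ∩ p.2 ×ˢ (univ : Set Z)) with hE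
    set T : Set (Set Z) := E '' (S ×ˢ B) with hT
    have hTc : T.Countable :=
      (hSc.prod ((countable_countableBasis Y).mono (sep_subset _ _))).image _
    have hTo : ∀ t ∈ T, IsOpen t := by
      rintro t ⟨⟨U, b⟩, ⟨hU, hb⟩, rfl⟩
      exact isOpenMap_snd _ ((hSo U hU).inter
        ((isOpen_of_mem_countableBasis hb.1).prod isOpen_univ))
    have hTd : ∀ t ∈ T, Dense t := by
      rintro t ⟨⟨U, b⟩, ⟨hU, hb⟩, rfl⟩
      rw [dense_iff_inter_open]
      intro W hW hWne
      have hbW : (b ×ˢ W).Nonempty := hb.2.prod hWne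
      obtain ⟨⟨y, z⟩, hyz⟩ := (hSd U hU).inter_open_nonempty (b ×ˢ W)
        ((isOpen_of_mem_countableBasis hb.1).prod hW) hbW
      refine ⟨z, hyz.1.2, ?_⟩
      exact ⟨⟨y, z⟩, ⟨hyz.2, hyz.1.1, trivial⟩, rfl⟩
    have hdense : Dense (⋂₀ T) := dense_sInter_of_isOpen hTo hTc hTd
    obtain ⟨z₀, hz₀⟩ := hdense.nonempty
    rw [mem_residual_iff]
    refine ⟨(fun U => {y | (y, z₀) ∈ U}) '' S, ?_, ?_, hSc.image _, ?_⟩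
    · rintro t ⟨U, hU, rfl⟩
      exact (hSo U hU).preimage (Continuous.prodMk_left z₀)
    · rintro t ⟨U, hU, rfl⟩
      rw [dense_iff_inter_open]
      intro V hV hVne
      obtain ⟨y, hy⟩ := hVne
      obtain ⟨b, hbB, hyb, hbV⟩ :=
        (isBasis_countableBasis Y).exists_subset_of_mem_open hy hV
      have hbE : E (U, b) ∈ T := ⟨(U, b), ⟨hU, hbB, ⟨y, hyb⟩⟩, rfl⟩
      obtain ⟨⟨y', z'⟩, hy', hz'⟩ := hz₀ _ hbE
      rcases hz' with rfl
      refine ⟨y', hbV hy'.2.1, ?_⟩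
      exact hy'.1
    · intro y hy
      have : (y, z₀) ∈ ⋂₀ S := by
        intro U hU
        exact hy _ ⟨U, hU, rfl⟩
      exact (hSsub this).1
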